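/- Let H be an N_r × N_t complex matrix of rank N_r (N_t ≥ N_r) with det(H H*) = 1, and define C(P) = sup over positive semidefinite N_t × N_t matrices C_x with trace(C_x) ≤ P of log det(I + H C_x H*). Then C(P) − N_r · log(P/N_r) → 0 as P → ∞. -/

import Mathlib

open Matrix Filter ComplexOrder

namespace MimoAux

variable {n : ℕ}

/-- trace real part equals sum of eigenvalues for a Hermitian complex matrix -/
lemma trace_re_eq_sum {M : Matrix (Fin n) (Fin n) ℂ} (hM : M.IsHermitian) :
    M.trace.re = ∑ i, hM.eigenvalues i := by
  have h2 : M.trace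
      = (Matrix.diagonal (RCLike.ofReal ∘ hM.eigenvalues) : Matrix (Fin n) (Fin n) ℂ).trace := by
    conv_lhs => rw [hM.spectral_theorem]
    rw [Unitary.conjStarAlgAut_apply, Matrix.trace_mul_cycle, Unitary.coe_star_mul_self, one_mul]
  rw [h2, Matrix.trace_diagonal]
  rw [Complex.re_sum]
  simp

lemma det_re_eq_prod {M : Matrix (Fin n) (Fin n) ℂ} (hM : M.IsHermitian) :
    M.det.re = ∏ i, hM.eigenvalues i := by
  rw [hM.det_eq_prod_eigenvalues]
  norm_cast

lemma psd_trace_re_nonneg {M : Matrix (Fin n) (Fin n) ℂ} (hM : M.PosSemidef) :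
    0 ≤ M.trace.re := by
  rw [trace_re_eq_sum hM.1]
  exact Finset.sum_nonneg fun i _ => hM.eigenvalues_nonneg i

lemma smul_psd {M : Matrix (Fin n) (Fin n) ℂ} (hM : M.PosSemidef) {c : ℝ} (hc : 0 ≤ c) :
    ((c : ℂ) • M).PosSemidef := by
  refine ⟨?_, fun x => ?_⟩
  · have : ((c : ℂ) • M)ᴴ = (starRingEnd ℂ (c : ℂ)) • Mᴴ := conjTranspose_smul _ _
    rw [Matrix.IsHermitian, this, Complex.conj_ofReal, hM.1.eq]
  · have h0 : (0 : ℂ) ≤ (c : ℂ) := by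
      rw [Complex.le_def]
      simp [hc]
    exact (hM.smul h0).2 x

open scoped MatrixOrder in
lemma trace_mul_re_nonneg {X Y : Matrix (Fin n) (Fin n) ℂ}
    (hX : X.PosSemidef) (hY : Y.PosSemidef) : 0 ≤ (X * Y).trace.re := by
  classical
  have h1 : X * Y = CFC.sqrt X * (CFC.sqrt X * Y) := by
    rw [← Matrix.mul_assoc, CFC.sqrt_mul_sqrt_self X hX.nonneg]
  have h2 : (X * Y).trace = (CFC.sqrt X * Y * CFC.sqrt X).trace := by
    rw [h1, Matrix.trace_mul_comm, Matrix.mul_assoc]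
  have hpsd : (CFC.sqrt X * Y * CFC.sqrt X).PosSemidef := by
    have := hY.mul_mul_conjTranspose_same (CFC.sqrt X)
    rwa [(CFC.sqrt_nonneg X).posSemidef.1.eq] at this
  rw [h2]
  exact psd_trace_re_nonneg hpsd

/-- AM-GM for finitely many nonnegative reals -/
lemma prod_le_div_pow (hn : 0 < n) (z : Fin n → ℝ) (hz : ∀ i, 0 ≤ z i)
    {t : ℝ} (ht : ∑ i, z i ≤ t) : ∏ i, z i ≤ (t / n) ^ n := by
  have hs : (0:ℝ) < ∑ _i : Fin n, (1:ℝ) := by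
    simp [hn]
  have h := Real.geom_mean_le_arith_mean Finset.univ (fun _ => (1:ℝ)) z
    (fun i _ => zero_le_one) hs (fun i _ => hz i)
  simp only [Real.rpow_one, one_mul] at h
  have hsum1 : (∑ _i : Fin n, (1:ℝ)) = (n:ℝ) := by simp
  rw [hsum1] at h
  -- h : (∏ i, z i) ^ (n:ℝ)⁻¹ ≤ (∑ i, z i) / n
  have hprod0 : (0:ℝ) ≤ ∏ i, z i := Finset.prod_nonneg fun i _ => hz i
  have hn' : (n:ℝ) ≠ 0 := Nat.cast_ne_zero.mpr hn.ne'
  have key : ∏ i, z i = (((∏ i, z i) ^ ((n:ℝ)⁻¹)) ^ (n:ℕ)) := by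
    rw [← Real.rpow_natCast ((∏ i, z i) ^ ((n:ℝ)⁻¹)) n, ← Real.rpow_mul hprod0,
      inv_mul_cancel₀ hn', Real.rpow_one]
  rw [key]
  have h2 : ((∏ i, z i) ^ ((n:ℝ)⁻¹)) ^ (n:ℕ) ≤ ((∑ i, z i) / n) ^ (n:ℕ) :=
    pow_le_pow_left₀ (Real.rpow_nonneg hprod0 _) h n
  refine h2.trans ?_
  gcongr
  · exact div_nonneg (Finset.sum_nonneg fun i _ => hz i) (Nat.cast_nonneg n)

lemma det_one_add_smul_re {M : Matrix (Fin n) (Fin n) ℂ} (hM : M.IsHermitian) (c : ℝ) :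
    (1 + (c : ℂ) • M).det.re = ∏ i, (1 + c * hM.eigenvalues i) := by
  classical
  set U : Matrix (Fin n) (Fin n) ℂ := (hM.eigenvectorUnitary : Matrix (Fin n) (Fin n) ℂ) with hUdef
  have hU : U * star U = 1 := Matrix.mem_unitaryGroup_iff.mp hM.eigenvectorUnitary.2
  have hrep : 1 + (c : ℂ) • M
      = U * (1 + (c:ℂ) • Matrix.diagonal (RCLike.ofReal ∘ hM.eigenvalues)) * star U := by
    conv_lhs => rw [hM.spectral_theorem, Unitary.conjStarAlgAut_apply]
    rw [mul_add, add_mul, mul_one, hU, mul_smul_comm, smul_mul_assoc]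
  rw [hrep, Matrix.det_mul_right_comm, hU, one_mul]
  rw [← Matrix.diagonal_one, ← Matrix.diagonal_smul, Matrix.diagonal_add, Matrix.det_diagonal]
  simp only [Pi.smul_apply, Function.comp_apply, Complex.real_smul, Pi.one_apply,
    smul_eq_mul]
  have hco : ∀ x : ℝ, (RCLike.ofReal x : ℂ) = Complex.ofReal x := fun _ => rfl
  simp only [hco]
  simp only [← Complex.ofReal_one, ← Complex.ofReal_mul, ← Complex.ofReal_add,
    ← Complex.ofReal_prod, Complex.ofReal_re]

end MimoAux

set_option maxHeartbeats 1600000 in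
/-- High-SNR asymptotics of the MIMO point-to-point capacity: with `det (H Hᴴ) = 1`,
`C(P) − N_r log(P/N_r) → 0` as `P → ∞`, where
`C(P) = sup { log det(I + H C_x Hᴴ) : C_x ⪰ 0, tr C_x ≤ P }`. -/
theorem mimo_capacity_high_snr
    {Nr Nt : ℕ} (h : Nr ≤ Nt)
    (H : Matrix (Fin Nr) (Fin Nt) ℂ)
    (hr : H.rank = Nr)
    (hdet : (H * Hᴴ).det = 1) :
    Tendsto
      (fun P : ℝ =>
        sSup {r : ℝ | ∃ Cx : Matrix (Fin Nt) (Fin Nt) ℂ,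
          Cx.PosSemidef ∧ Cx.trace.re ≤ P ∧
          r = Real.log ((1 + H * Cx * Hᴴ).det.re)}
        - Nr * Real.log (P / Nr)) atTop (nhds 0) := by
  classical
  by_cases hNr : Nr = 0
  · -- degenerate case: all determinants are 1, and the correction term vanishes
    subst hNr
    have hset : ∀ P : ℝ, 0 ≤ P → {r : ℝ | ∃ Cx : Matrix (Fin Nt) (Fin Nt) ℂ,
        Cx.PosSemidef ∧ Cx.trace.re ≤ P ∧
        r = Real.log ((1 + H * Cx * Hᴴ).det.re)} = {0} := by
      intro P hP
      ext r
      simp only [Set.mem_setOf_eq, Set.mem_singleton_iff]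
      constructor
      · rintro ⟨Cx, -, -, rfl⟩
        rw [Matrix.det_fin_zero]
        simp
      · rintro rfl
        exact ⟨0, Matrix.PosSemidef.zero, by simp [hP], by rw [Matrix.det_fin_zero]; simp⟩
    have heq : (fun _ : ℝ => (0:ℝ)) =ᶠ[atTop] (fun P : ℝ =>
        sSup {r : ℝ | ∃ Cx : Matrix (Fin Nt) (Fin Nt) ℂ,
          Cx.PosSemidef ∧ Cx.trace.re ≤ P ∧
          r = Real.log ((1 + H * Cx * Hᴴ).det.re)}
        - (0:ℕ) * Real.log (P / (0:ℕ))) := by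
      filter_upwards [eventually_ge_atTop (0:ℝ)] with P hP
      rw [hset P hP]
      simp
    exact Tendsto.congr' heq tendsto_const_nhds
  -- main case
  have hNrpos : 0 < Nr := Nat.pos_of_ne_zero hNr
  have hNrR : (0:ℝ) < Nr := by exact_mod_cast hNrpos
  have hApsd : (H * Hᴴ).PosSemidef := Matrix.posSemidef_self_mul_conjTranspose H
  have hu : IsUnit (H * Hᴴ).det := by rw [hdet]; exact isUnit_one
  have hApd : (H * Hᴴ).PosDef := by
    exact hApsd.posDef_iff_isUnit.mpr ((Matrix.isUnit_iff_isUnit_det _).mpr hu)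
  have hAinv : ((H * Hᴴ)⁻¹).PosDef := hApd.inv
  have hinvmul : (H * Hᴴ)⁻¹ * (H * Hᴴ) = 1 := Matrix.nonsing_inv_mul _ hu
  have hmulinv : (H * Hᴴ) * (H * Hᴴ)⁻¹ = 1 := Matrix.mul_nonsing_inv _ hu
  set Pi' : Matrix (Fin Nt) (Fin Nt) ℂ := Hᴴ * (H * Hᴴ)⁻¹ * H with hPidef
  have hPipsd : Pi'.PosSemidef := hAinv.posSemidef.conjTranspose_mul_mul_same H
  have hPitrace : Pi'.trace = (Nr : ℂ) := by
    rw [hPidef, Matrix.trace_mul_cycle, hmulinv, Matrix.trace_one]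
    simp
  have hHPiH : H * Pi' * Hᴴ = H * Hᴴ := by
    rw [hPidef]
    calc H * (Hᴴ * (H * Hᴴ)⁻¹ * H) * Hᴴ
        = (H * Hᴴ) * (H * Hᴴ)⁻¹ * (H * Hᴴ) := by simp only [Matrix.mul_assoc]
      _ = H * Hᴴ := by rw [hmulinv, Matrix.one_mul]
  have hPiH : Pi'ᴴ = Pi' := by
    rw [hPidef]
    simp only [Matrix.conjTranspose_mul, Matrix.conjTranspose_conjTranspose,
      hAinv.isHermitian.eq, Matrix.mul_assoc]
  have hPiidem : Pi' * Pi' = Pi' := by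
    rw [hPidef]
    calc (Hᴴ * (H * Hᴴ)⁻¹ * H) * (Hᴴ * (H * Hᴴ)⁻¹ * H)
        = Hᴴ * (H * Hᴴ)⁻¹ * ((H * Hᴴ) * ((H * Hᴴ)⁻¹ * H)) := by simp only [Matrix.mul_assoc]
      _ = Hᴴ * (H * Hᴴ)⁻¹ * H := by rw [← Matrix.mul_assoc (H * Hᴴ), hmulinv, Matrix.one_mul]
  have h1Pi : (1 - Pi').PosSemidef := by
    have hps := Matrix.posSemidef_conjTranspose_mul_self (1 - Pi')
    have heq : (1 - Pi')ᴴ * (1 - Pi') = 1 - Pi' := by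
      rw [Matrix.conjTranspose_sub, Matrix.conjTranspose_one, hPiH]
      have hexp : (1 - Pi') * (1 - Pi') = 1 - Pi' - Pi' + Pi' * Pi' := by noncomm_ring
      rw [hexp, hPiidem]
      abel
    rwa [heq] at hps
  set c : ℝ := ((H * Hᴴ)⁻¹).trace.re with hcdef
  have hc0 : 0 ≤ c := MimoAux.psd_trace_re_nonneg hAinv.posSemidef
  -- upper bound for every element of the admissible set
  have hub : ∀ P : ℝ, ∀ r : ℝ,
      (∃ Cx : Matrix (Fin Nt) (Fin Nt) ℂ, Cx.PosSemidef ∧ Cx.trace.re ≤ P ∧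
        r = Real.log ((1 + H * Cx * Hᴴ).det.re)) →
      r ≤ Nr * Real.log ((c + P) / Nr) := by
    rintro P r ⟨Cx, hCx, htr, rfl⟩
    open scoped MatrixOrder in set B := CFC.sqrt (H * Hᴴ)⁻¹ with hBdef
    open scoped MatrixOrder in have hBB : B * B = (H * Hᴴ)⁻¹ := CFC.sqrt_mul_sqrt_self _ hAinv.posSemidef.nonneg
    open scoped MatrixOrder in have hBH : Bᴴ = B := (CFC.sqrt_nonneg _).posSemidef.1.eq
    set D : Matrix (Fin Nr) (Fin Nr) ℂ := (H * Hᴴ)⁻¹ + (B * H) * Cx * (B * H)ᴴ with hDdef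
    have hDpd : D.PosDef := hAinv.add_posSemidef (hCx.mul_mul_conjTranspose_same (B * H))
    have h1 : B * (1 + H * Cx * Hᴴ) * B = D := by
      rw [hDdef, Matrix.conjTranspose_mul, hBH, ← hBB]
      simp only [Matrix.mul_add, Matrix.mul_one, Matrix.add_mul, Matrix.mul_assoc]
    have hdetB : B.det * B.det = 1 := by
      have hd : (B * B).det = ((H * Hᴴ)⁻¹).det := by rw [hBB]
      rw [Matrix.det_mul] at hd
      rw [hd, Matrix.det_nonsing_inv, hdet, Ring.inverse_one]
    have hdetD : (1 + H * Cx * Hᴴ).det = D.det := by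
      have hD2 : D.det = B.det * (1 + H * Cx * Hᴴ).det * B.det := by
        rw [← h1, Matrix.det_mul, Matrix.det_mul]
      rw [hD2]
      linear_combination (1 + H * Cx * Hᴴ).det * hdetB.symm
    have h3 : ((B * H) * Cx * (B * H)ᴴ).trace = (Pi' * Cx).trace := by
      rw [Matrix.trace_mul_cycle]
      congr 1
      rw [hPidef]
      calc (B * H)ᴴ * (B * H) * Cx = Hᴴ * ((B * B) * (H * Cx)) := by
            rw [Matrix.conjTranspose_mul, hBH]
            simp only [Matrix.mul_assoc]
        _ = Hᴴ * (H * Hᴴ)⁻¹ * H * Cx := by rw [hBB]; simp only [Matrix.mul_assoc]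
    have h4 : (Pi' * Cx).trace.re ≤ Cx.trace.re := by
      have h5 : 0 ≤ ((1 - Pi') * Cx).trace.re := MimoAux.trace_mul_re_nonneg h1Pi hCx
      have h6 : (1 - Pi') * Cx = Cx - Pi' * Cx := by rw [Matrix.sub_mul, Matrix.one_mul]
      rw [h6, Matrix.trace_sub, Complex.sub_re] at h5
      linarith
    have htrD : D.trace.re ≤ c + P := by
      have h7 : D.trace.re = c + (Pi' * Cx).trace.re := by
        rw [hDdef, Matrix.trace_add, h3, Complex.add_re, hcdef]
      rw [h7]
      linarith
    have hDpsd := hDpd.posSemidef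
    have hAM : D.det.re ≤ ((c + P) / Nr) ^ Nr := by
      rw [MimoAux.det_re_eq_prod hDpsd.1]
      refine MimoAux.prod_le_div_pow hNrpos _ (fun i => hDpsd.eigenvalues_nonneg i) ?_
      rw [← MimoAux.trace_re_eq_sum hDpsd.1]
      exact htrD
    have hpos : 0 < D.det.re := by
      have hdp := hDpd.det_pos
      rw [Complex.lt_def] at hdp
      simpa using hdp.1
    calc Real.log ((1 + H * Cx * Hᴴ).det.re) = Real.log (D.det.re) := by rw [hdetD]
      _ ≤ Real.log (((c + P) / Nr) ^ Nr) := Real.log_le_log hpos hAM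
      _ = Nr * Real.log ((c + P) / Nr) := by rw [Real.log_pow]
  have hbdd : ∀ P : ℝ, BddAbove {r : ℝ | ∃ Cx : Matrix (Fin Nt) (Fin Nt) ℂ,
      Cx.PosSemidef ∧ Cx.trace.re ≤ P ∧
      r = Real.log ((1 + H * Cx * Hᴴ).det.re)} :=
    fun P => ⟨Nr * Real.log ((c + P) / Nr), fun r hr => hub P r hr⟩
  -- lower bound
  have hlb : ∀ᶠ P : ℝ in atTop, (0:ℝ) ≤
      sSup {r : ℝ | ∃ Cx : Matrix (Fin Nt) (Fin Nt) ℂ,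
        Cx.PosSemidef ∧ Cx.trace.re ≤ P ∧
        r = Real.log ((1 + H * Cx * Hᴴ).det.re)}
      - Nr * Real.log (P / Nr) := by
    filter_upwards [eventually_gt_atTop (0:ℝ)] with P hP
    set q : ℝ := P / Nr with hqdef
    have hq0 : 0 < q := div_pos hP hNrR
    set Cx0 : Matrix (Fin Nt) (Fin Nt) ℂ := (q : ℂ) • Pi' with hCx0def
    have hCx0psd : Cx0.PosSemidef := MimoAux.smul_psd hPipsd hq0.le
    have hCx0tr : Cx0.trace.re = P := by
      rw [hCx0def, Matrix.trace_smul, hPitrace, smul_eq_mul, ← Complex.ofReal_natCast,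
        ← Complex.ofReal_mul, Complex.ofReal_re, hqdef, div_mul_cancel₀ _ hNrR.ne']
    have hHC : 1 + H * Cx0 * Hᴴ = 1 + (q : ℂ) • (H * Hᴴ) := by
      rw [hCx0def, Matrix.mul_smul, Matrix.smul_mul, hHPiH]
    have hdetval : (1 + H * Cx0 * Hᴴ).det.re = ∏ i, (1 + q * hApsd.1.eigenvalues i) := by
      rw [hHC]
      exact MimoAux.det_one_add_smul_re hApsd.1 q
    have hprodA : ∏ i, hApsd.1.eigenvalues i = 1 := by
      have := MimoAux.det_re_eq_prod hApsd.1
      rw [hdet] at this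
      simpa using this.symm
    have hqpow : q ^ Nr ≤ (1 + H * Cx0 * Hᴴ).det.re := by
      rw [hdetval]
      calc q ^ Nr = ∏ i : Fin Nr, (q * hApsd.1.eigenvalues i) := by
            rw [Finset.prod_mul_distrib, Finset.prod_const, hprodA, mul_one]
            simp
        _ ≤ ∏ i : Fin Nr, (1 + q * hApsd.1.eigenvalues i) := by
            refine Finset.prod_le_prod (fun i _ => ?_) (fun i _ => ?_)
            · exact mul_nonneg hq0.le (hApsd.eigenvalues_nonneg i)
            · linarith [mul_nonneg hq0.le (hApsd.eigenvalues_nonneg i)]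
    have hmem : Real.log ((1 + H * Cx0 * Hᴴ).det.re) ∈
        {r : ℝ | ∃ Cx : Matrix (Fin Nt) (Fin Nt) ℂ,
          Cx.PosSemidef ∧ Cx.trace.re ≤ P ∧
          r = Real.log ((1 + H * Cx * Hᴴ).det.re)} :=
      ⟨Cx0, hCx0psd, le_of_eq hCx0tr, rfl⟩
    have hsup := le_csSup (hbdd P) hmem
    have hlog : Nr * Real.log q ≤ Real.log ((1 + H * Cx0 * Hᴴ).det.re) := by
      rw [show (Nr : ℝ) * Real.log q = Real.log (q ^ Nr) from (Real.log_pow _ _).symm]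
      exact Real.log_le_log (pow_pos hq0 _) hqpow
    have := hlog.trans hsup
    linarith
  -- upper eventual bound
  have hle2 : ∀ᶠ P : ℝ in atTop,
      sSup {r : ℝ | ∃ Cx : Matrix (Fin Nt) (Fin Nt) ℂ,
        Cx.PosSemidef ∧ Cx.trace.re ≤ P ∧
        r = Real.log ((1 + H * Cx * Hᴴ).det.re)}
      - Nr * Real.log (P / Nr) ≤ Nr * (Real.log (c + P) - Real.log P) := by
    filter_upwards [eventually_gt_atTop (0:ℝ)] with P hP
    have hne : Set.Nonempty {r : ℝ | ∃ Cx : Matrix (Fin Nt) (Fin Nt) ℂ,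
        Cx.PosSemidef ∧ Cx.trace.re ≤ P ∧
        r = Real.log ((1 + H * Cx * Hᴴ).det.re)} := by
      refine ⟨Real.log ((1 + H * (0 : Matrix (Fin Nt) (Fin Nt) ℂ) * Hᴴ).det.re), 0,
        Matrix.PosSemidef.zero, ?_, rfl⟩
      simp [hP.le]
    have hS := csSup_le hne (fun r hr => hub P r hr)
    have hcP : (0:ℝ) < c + P := by linarith
    have hrw : (Nr:ℝ) * Real.log ((c + P) / Nr) - Nr * Real.log (P / Nr)
        = Nr * (Real.log (c + P) - Real.log P) := by
      rw [Real.log_div hcP.ne' hNrR.ne', Real.log_div hP.ne' hNrR.ne']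
      ring
    linarith [hS, hrw.le, hrw.ge]
  -- the upper bound function tends to zero
  have hg : Tendsto (fun P : ℝ => (Nr:ℝ) * (Real.log (c + P) - Real.log P))
      atTop (nhds 0) := by
    have h1 : Tendsto (fun P : ℝ => (c + P) / P) atTop (nhds 1) := by
      have h2 : Tendsto (fun P : ℝ => c / P + 1) atTop (nhds 1) := by
        have h3 : Tendsto (fun P : ℝ => c / P) atTop (nhds 0) :=
          Tendsto.div_atTop tendsto_const_nhds tendsto_id
        simpa using h3.add tendsto_const_nhds
      refine h2.congr' ?_
      filter_upwards [eventually_gt_atTop (0:ℝ)] with P hP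
      field_simp
    have h2 : Tendsto (fun P : ℝ => Real.log ((c + P) / P)) atTop (nhds 0) := by
      have := (Real.continuousAt_log one_ne_zero).tendsto.comp h1
      simpa [Real.log_one, Function.comp_def] using this
    have h3 : (fun P : ℝ => Real.log ((c + P) / P)) =ᶠ[atTop]
        (fun P : ℝ => Real.log (c + P) - Real.log P) := by
      filter_upwards [eventually_gt_atTop (0:ℝ)] with P hP
      rw [Real.log_div (by linarith) hP.ne']
    have h4 : Tendsto (fun P : ℝ => Real.log (c + P) - Real.log P) atTop (nhds 0) :=
      Tendsto.congr' h3 h2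
    have h5 := h4.const_mul (Nr:ℝ)
    simpa using h5
  exact tendsto_of_tendsto_of_tendsto_of_le_of_le' tendsto_const_nhds hg hlb hle2
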